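/- Consider a heterogeneous game Γ(n,T,x,y,z) with y > 0 and z > 0. Let (T_1, T_2) be a partition of T into two nonempty sets and X_2 = ∑_{t∈T_2} x_t, and suppose X_2 > (1 − 1/n)·ζ + 1/n. Then a_2 := (n−1)·ζ/(n·X_2 − 1) satisfies 0 < a_2 < 1, and the strategy α* taking value 0 on T_1 and value a_2 on T_2 is a symmetric Nash equilibrium. -/

import Mathlib

open Finset

noncomputable def U {T : Type*} [Fintype T] (n : ℕ) (x : T → ℝ) (y z : ℝ)
    (α β : T → ℝ) : ℝ :=
  z * ∑ j, x j * β j +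
    ∑ j, (x j / ((n : ℝ) - 1)) *
      (((n : ℝ) - 1) * y + (y + z) * β j - (n : ℝ) * (y + z) * ∑ i, x i * β i) * α j

def IsStrategy {T : Type*} (α : T → ℝ) : Prop :=
  ∀ t, α t ∈ Set.Icc (0 : ℝ) 1

def IsSymNash {T : Type*} [Fintype T] (n : ℕ) (x : T → ℝ) (y z : ℝ)
    (α : T → ℝ) : Prop :=
  IsStrategy α ∧ ∀ β : T → ℝ, IsStrategy β → U n x y z β α ≤ U n x y z α α

theorem stmt12 {T : Type*} [Fintype T] [DecidableEq T] (hT : 2 ≤ Fintype.card T)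
    (n : ℕ) (x : T → ℝ) (hx : ∑ t, x t = 1)
    (hxt : ∀ t : T, 1 < (n : ℝ) * x t ∧ (n : ℝ) * x t < n)
    (y z : ℝ) (hy : 0 < y) (hz : 0 < z)
    (T1 T2 : Finset T) (hT1 : T1.Nonempty) (hT2 : T2.Nonempty)
    (hdisj : Disjoint T1 T2) (hcover : T1 ∪ T2 = Finset.univ)
    (hX2 : (1 - 1 / (n : ℝ)) * (y / (y + z)) + 1 / (n : ℝ) < ∑ t ∈ T2, x t) :
    (0 < ((n : ℝ) - 1) * (y / (y + z)) / ((n : ℝ) * ∑ t ∈ T2, x t - 1) ∧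
     ((n : ℝ) - 1) * (y / (y + z)) / ((n : ℝ) * ∑ t ∈ T2, x t - 1) < 1) ∧
    IsSymNash n x y z
      (fun t => if t ∈ T1 then 0
        else ((n : ℝ) - 1) * (y / (y + z)) / ((n : ℝ) * ∑ t ∈ T2, x t - 1)) := by
  obtain ⟨t0, ht0⟩ := hT1
  have hN1 : (1:ℝ) < n := (hxt t0).1.trans (hxt t0).2
  have hNpos : (0:ℝ) < n := by linarith
  have hyz : (0:ℝ) < y + z := by linarith
  set ζ : ℝ := y / (y + z) with hζdef
  have hζpos : 0 < ζ := div_pos hy hyz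
  have hζlt : ζ < 1 := (div_lt_one hyz).2 (by linarith)
  have hζy : ζ * (y + z) = y := div_mul_cancel₀ y (ne_of_gt hyz)
  set X2 : ℝ := ∑ t ∈ T2, x t with hX2def
  have hmul : (n:ℝ) * ((1 - 1 / (n:ℝ)) * ζ + 1 / (n:ℝ)) = ((n:ℝ) - 1) * ζ + 1 := by
    field_simp
  have hkey : ((n:ℝ) - 1) * ζ + 1 < (n:ℝ) * X2 := by
    have := mul_lt_mul_of_pos_left hX2 hNpos
    linarith
  have hD : 0 < (n:ℝ) * X2 - 1 := by nlinarith [mul_pos (show (0:ℝ) < (n:ℝ) - 1 by linarith) hζpos]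
  set a2 : ℝ := ((n:ℝ) - 1) * ζ / ((n:ℝ) * X2 - 1) with ha2def
  have ha2pos : 0 < a2 := div_pos (mul_pos (by linarith) hζpos) hD
  have ha2lt : a2 < 1 := (div_lt_one hD).2 (by linarith)
  have hka : (y + z) * a2 * ((n:ℝ) * X2 - 1) = ((n:ℝ) - 1) * y := by
    have h1 : a2 * ((n:ℝ) * X2 - 1) = ((n:ℝ) - 1) * ζ := div_mul_cancel₀ _ (ne_of_gt hD)
    calc (y + z) * a2 * ((n:ℝ) * X2 - 1) = (a2 * ((n:ℝ) * X2 - 1)) * (y + z) := by ring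
    _ = (((n:ℝ) - 1) * ζ) * (y + z) := by rw [h1]
    _ = ((n:ℝ) - 1) * (ζ * (y + z)) := by ring
    _ = ((n:ℝ) - 1) * y := by rw [hζy]
  set α : T → ℝ := fun t => if t ∈ T1 then 0 else a2 with hαdef
  have hαT2 : ∀ t ∈ T2, α t = a2 := by
    intro t ht
    have : t ∉ T1 := Finset.disjoint_right.mp hdisj ht
    simp [hαdef, this]
  have hS : ∑ i, x i * α i = X2 * a2 := by
    rw [← hcover, Finset.sum_union hdisj]
    have h1 : ∑ i ∈ T1, x i * α i = 0 :=
      Finset.sum_eq_zero (fun i hi => by simp [hαdef, hi])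
    have h2 : ∑ i ∈ T2, x i * α i = X2 * a2 := by
      rw [Finset.sum_congr rfl (fun i hi => by rw [hαT2 i hi]), ← Finset.sum_mul]
    rw [h1, h2, zero_add]
  have hxpos : ∀ j : T, 0 < x j := by
    intro j
    nlinarith [(hxt j).1]
  refine ⟨⟨ha2pos, ha2lt⟩, ?_, ?_⟩
  · intro t
    by_cases ht : t ∈ T1 <;> simp [hαdef, ht, Set.mem_Icc]
    exact ⟨ha2pos.le, ha2lt.le⟩
  · intro β hβ
    unfold U
    simp only [hS]
    apply add_le_add le_rfl
    apply Finset.sum_le_sum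
    intro j _
    by_cases hj : j ∈ T1
    · have hαj : α j = 0 := by simp [hαdef, hj]
      rw [hαj]
      have hinn : ((n:ℝ) - 1) * y + (y + z) * (0:ℝ) - (n:ℝ) * (y + z) * (X2 * a2) ≤ 0 := by
        nlinarith [mul_pos hyz ha2pos]
      have hq : 0 ≤ x j / ((n:ℝ) - 1) := div_nonneg (hxpos j).le (by linarith)
      calc x j / ((n:ℝ) - 1) * (((n:ℝ) - 1) * y + (y + z) * (0:ℝ) - (n:ℝ) * (y + z) * (X2 * a2)) * β j
          ≤ 0 := mul_nonpos_of_nonpos_of_nonneg (mul_nonpos_of_nonneg_of_nonpos hq hinn) (hβ j).1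
        _ = x j / ((n:ℝ) - 1) * (((n:ℝ) - 1) * y + (y + z) * (0:ℝ) - (n:ℝ) * (y + z) * (X2 * a2)) * (0:ℝ) := by ring
    · have hαj : α j = a2 := by simp [hαdef, hj]
      rw [hαj]
      apply le_of_eq
      have hinn : ((n:ℝ) - 1) * y + (y + z) * a2 - (n:ℝ) * (y + z) * (X2 * a2) = 0 := by
        nlinarith [hka]
      rw [hinn]
      ring
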